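/- For every n ≥ 2, let G_n be the complement of the spider consisting of a center c and n legs each with 3 vertices (that is, G_n has vertex set {c} ∪ {v_{i,1}, v_{i,2}, v_{i,3} : 1 ≤ i ≤ n}, and two distinct vertices are adjacent except for the pairs {c, v_{i,1}}, {v_{i,1}, v_{i,2}} and {v_{i,2}, v_{i,3}} for each i). Then G_n is connected and co-connected, so τ(G_n) = 3n − 1, and the family {{c, v_{i,1}, v_{i,2}, v_{i,3}} : 1 ≤ i ≤ n} is a connecting hypergraph of G_n of cost 2n; hence the ratio τ(G_n)/opt(G_n) tends to 3/2, where opt(G_n) denotes the minimum cost of a connecting hypergraph of G_n. -/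

import Mathlib

variable {V : Type*}

/-- The transition consisting of the edges `ab` and `bc`, written `abc`. -/
def transitionOf (a b c : V) : Sym2 (Sym2 V) := s(s(a, b), s(b, c))

/-- `t` is a transition of `G`: an unordered pair of two distinct adjacent edges. -/
def SimpleGraph.IsTransition (G : SimpleGraph V) (t : Sym2 (Sym2 V)) : Prop :=
  ∃ a b c, G.Adj a b ∧ G.Adj b c ∧ a ≠ c ∧ t = transitionOf a b c

/-- A list of vertices (the support of a walk) is `T`-compatible: every pair of
consecutive edges is either a transition of `T` or a backtrack. -/
def TCompatible (T : Set (Sym2 (Sym2 V))) (l : List V) : Prop :=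
  ∀ (i : ℕ) (h : i + 2 < l.length),
    l[i]'(by omega) = l[i + 2]'h ∨
    transitionOf (l[i]'(by omega)) (l[i + 1]'(by omega)) (l[i + 2]'h) ∈ T

/-- `G` is `T`-connected: every two vertices are joined by a `T`-compatible walk. -/
def SimpleGraph.TConnected (G : SimpleGraph V) (T : Set (Sym2 (Sym2 V))) : Prop :=
  ∀ u v : V, ∃ p : G.Walk u v, TCompatible T p.support

/-- `T` is a connecting transition set of `G`. -/
def SimpleGraph.ConnectingTransitionSet (G : SimpleGraph V)
    (T : Finset (Sym2 (Sym2 V))) : Prop :=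
  (∀ t ∈ T, G.IsTransition t) ∧ G.TConnected ↑T

/-- `H` is a connecting hypergraph of `G`: every hyperedge has at least two vertices and
induces a connected subgraph, and every pair of distinct non-adjacent vertices is
contained in a common hyperedge. -/
def SimpleGraph.ConnectingHypergraph (G : SimpleGraph V) (H : Finset (Finset V)) : Prop :=
  (∀ E ∈ H, 2 ≤ E.card ∧ (G.induce (E : Set V)).Connected) ∧
  ∀ u v : V, u ≠ v → ¬G.Adj u v → ∃ E ∈ H, u ∈ E ∧ v ∈ E

/-- The cost of a hypergraph: the sum over hyperedges of (size − 2). -/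
def hcost (H : Finset (Finset V)) : ℕ := ∑ E ∈ H, (E.card - 2)

/-- The quantity τ(G): the sum over co-connected components `C` of `G` with `|C| ≥ 2`
of `|C| − 2` if `G[C]` is connected and `|C| − 1` otherwise. -/
noncomputable def tau {V : Type*} [Fintype V] (G : SimpleGraph V) : ℕ := by
  classical
  haveI : Fintype Gᶜ.ConnectedComponent := Fintype.ofFinite _
  exact ∑ C : Gᶜ.ConnectedComponent,
    if 2 ≤ C.supp.ncard then
      (if (G.induce C.supp).Connected then C.supp.ncard - 2 else C.supp.ncard - 1)
    else 0

/-- The non-adjacency relation of the spider: the center `none` is joined to the first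
vertex of each leg, and consecutive vertices of a leg are joined. -/
def spiderRel (n : ℕ) (u v : Option (Fin n × Fin 3)) : Prop :=
  (u = none ∧ ∃ i : Fin n, v = some (i, 0)) ∨
  (∃ i : Fin n, u = some (i, 0) ∧ v = some (i, 1)) ∨
  (∃ i : Fin n, u = some (i, 1) ∧ v = some (i, 2))

/-- The spider with center `none` and `n` legs, each with 3 vertices. -/
def spider (n : ℕ) : SimpleGraph (Option (Fin n × Fin 3)) :=
  SimpleGraph.fromRel (spiderRel n)

/-- `Gₙ`: the complement of the spider with `n` legs of 3 vertices. -/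
def Gn (n : ℕ) : SimpleGraph (Option (Fin n × Fin 3)) := (spider n)ᶜ

/-- The hypergraph whose hyperedges are the sets `{c, v_{i,1}, v_{i,2}, v_{i,3}}`. -/
def legs (n : ℕ) : Finset (Finset (Option (Fin n × Fin 3))) :=
  Finset.univ.image fun i : Fin n =>
    ({none, some (i, 0), some (i, 1), some (i, 2)} : Finset (Option (Fin n × Fin 3)))

/-- The minimum cost of a connecting hypergraph of `Gₙ`. -/
noncomputable def opt (n : ℕ) : ℕ :=
  sInf {c : ℕ | ∃ H, (Gn n).ConnectingHypergraph H ∧ hcost H = c}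

open SimpleGraph
section
variable {n : ℕ}

lemma Gn_adj (u v : Option (Fin n × Fin 3)) :
    (Gn n).Adj u v ↔ u ≠ v ∧ ¬ spiderRel n u v ∧ ¬ spiderRel n v u := by
  simp only [Gn, SimpleGraph.compl_adj, spider, SimpleGraph.fromRel_adj]; tauto

lemma spider_adj (u v : Option (Fin n × Fin 3)) :
    (spider n).Adj u v ↔ u ≠ v ∧ (spiderRel n u v ∨ spiderRel n v u) := by
  simp [spider, SimpleGraph.fromRel_adj]

@[simp] lemma spiderRel_some_some (i j : Fin n) (a b : Fin 3) :
    spiderRel n (some (i,a)) (some (j,b)) ↔ i = j ∧ ((a = 0 ∧ b = 1) ∨ (a = 1 ∧ b = 2)) := by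
  unfold spiderRel
  constructor
  · rintro (⟨h, _⟩ | ⟨k, h1, h2⟩ | ⟨k, h1, h2⟩) <;> simp_all
  · rintro ⟨rfl, (⟨rfl, rfl⟩ | ⟨rfl, rfl⟩)⟩
    · exact Or.inr (Or.inl ⟨i, rfl, rfl⟩)
    · exact Or.inr (Or.inr ⟨i, rfl, rfl⟩)

@[simp] lemma spiderRel_none_some (i : Fin n) (a : Fin 3) :
    spiderRel n none (some (i,a)) ↔ a = 0 := by
  unfold spiderRel
  constructor
  · rintro (⟨h, k, hk⟩ | ⟨k, h1, h2⟩ | ⟨k, h1, h2⟩) <;> simp_all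
  · rintro rfl; exact Or.inl ⟨rfl, i, rfl⟩

@[simp] lemma spiderRel_some_none (x : Fin n × Fin 3) :
    ¬ spiderRel n (some x) none := by
  unfold spiderRel; rintro (⟨h, _⟩ | ⟨k, h1, h2⟩ | ⟨k, h1, h2⟩) <;> simp_all

@[simp] lemma spiderRel_none_none : ¬ spiderRel n (none) (none) := by
  unfold spiderRel; rintro (⟨h, k, hk⟩ | ⟨k, h1, h2⟩ | ⟨k, h1, h2⟩) <;> simp_all

lemma induce_adj_iff' {V : Type*} (G : SimpleGraph V) (s : Set V) (u v : s) :
    (G.induce s).Adj u v ↔ G.Adj u.1 v.1 := Iff.rfl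

lemma no_isolated {V : Type*} {G : SimpleGraph V} {E : Finset V}
    (hconn : (G.induce (E : Set V)).Connected) (hcard : 2 ≤ E.card) {u : V} (hu : u ∈ E) :
    ∃ w ∈ E, w ≠ u ∧ G.Adj u w := by
  obtain ⟨v, hv, hvu⟩ := Finset.exists_mem_ne (s := E) (by omega) u
  have hu' : u ∈ (E : Set V) := by simpa using hu
  have hv' : v ∈ (E : Set V) := by simpa using hv
  obtain ⟨p⟩ := hconn.preconnected ⟨u, hu'⟩ ⟨v, hv'⟩
  have hnil : ¬p.Nil := SimpleGraph.Walk.not_nil_of_ne (by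
    intro h
    exact hvu (congrArg Subtype.val h).symm)
  have hadj := SimpleGraph.Walk.adj_snd hnil
  rw [induce_adj_iff'] at hadj
  exact ⟨(p.getVert 1).1, by simpa using (p.getVert 1).2, hadj.ne.symm, hadj⟩

/-- the parent endpoint of the k-th spider edge -/
def pa (k : Fin n × Fin 3) : Option (Fin n × Fin 3) :=
  if k.2 = 0 then none else some (k.1, k.2 - 1)

/-- the child endpoint of the k-th spider edge -/
def pb (k : Fin n × Fin 3) : Option (Fin n × Fin 3) := some k

@[simp] lemma pa_zero (i : Fin n) : pa (i, 0) = none := rfl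
@[simp] lemma pa_one (i : Fin n) : pa (i, 1) = some (i, 0) := rfl
@[simp] lemma pa_two (i : Fin n) : pa (i, 2) = some (i, 1) := rfl
@[simp] lemma pb_def (k : Fin n × Fin 3) : pb k = some k := rfl

lemma rel_pa_pb (k : Fin n × Fin 3) : spiderRel n (pa k) (pb k) := by
  obtain ⟨i, j⟩ := k
  fin_cases j <;> simp

lemma middle_contra {E : Finset (Option (Fin n × Fin 3))}
    (hconn : ((Gn n).induce (E : Set _)).Connected) (hcard : E.card = 3)
    {u m v : Option (Fin n × Fin 3)} (hu : u ∈ E) (hm : m ∈ E) (hv : v ∈ E)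
    (hum : u ≠ m) (hvm : v ≠ m) (huv : u ≠ v)
    (h1 : spiderRel n m u ∨ spiderRel n u m) (h2 : spiderRel n m v ∨ spiderRel n v m) :
    False := by
  have hsub : ({u, m, v} : Finset _) ⊆ E := by
    intro x hx
    simp only [Finset.mem_insert, Finset.mem_singleton] at hx
    rcases hx with rfl | rfl | rfl <;> assumption
  have hc3 : ({u, m, v} : Finset (Option (Fin n × Fin 3))).card = 3 := by
    rw [Finset.card_insert_of_notMem (by simp [hum, huv]),
      Finset.card_insert_of_notMem (by simp [hvm.symm]), Finset.card_singleton]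
  have hEeq : E = {u, m, v} := (Finset.eq_of_subset_of_card_le hsub (by omega)).symm
  obtain ⟨w, hw, hwm, hadj⟩ := no_isolated hconn (by omega) hm
  rw [hEeq] at hw
  simp only [Finset.mem_insert, Finset.mem_singleton] at hw
  rw [Gn_adj] at hadj
  rcases hw with rfl | rfl | rfl
  · rcases h1 with h | h
    · exact hadj.2.1 h
    · exact hadj.2.2 h
  · exact hwm rfl
  · rcases h2 with h | h
    · exact hadj.2.1 h
    · exact hadj.2.2 h

lemma four_contra {E : Finset (Option (Fin n × Fin 3))} (hcard : E.card = 3)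
    {w x y z : Option (Fin n × Fin 3)} (hw : w ∈ E) (hx : x ∈ E) (hy : y ∈ E) (hz : z ∈ E)
    (h1 : w ≠ x) (h2 : w ≠ y) (h3 : w ≠ z) (h4 : x ≠ y) (h5 : x ≠ z) (h6 : y ≠ z) : False := by
  have hsub : ({w, x, y, z} : Finset _) ⊆ E := by
    intro a ha
    simp only [Finset.mem_insert, Finset.mem_singleton] at ha
    rcases ha with rfl | rfl | rfl | rfl <;> assumption
  have hc4 : ({w, x, y, z} : Finset (Option (Fin n × Fin 3))).card = 4 := by
    rw [Finset.card_insert_of_notMem (by simp [h1, h2, h3]),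
      Finset.card_insert_of_notMem (by simp [h4, h5]),
      Finset.card_insert_of_notMem (by simp [h6]), Finset.card_singleton]
  have := Finset.card_le_card hsub
  omega

end
section
variable {n : ℕ}

lemma fin3_cases (j : Fin 3) : j = 0 ∨ j = 1 ∨ j = 2 := by revert j; decide

/-- the set of spider edges inside E -/
def inE (E : Finset (Option (Fin n × Fin 3))) : Finset (Fin n × Fin 3) :=
  Finset.univ.filter fun k => pa k ∈ E ∧ pb k ∈ E

lemma mem_inE {E : Finset (Option (Fin n × Fin 3))} {k : Fin n × Fin 3} :
    k ∈ inE E ↔ pa k ∈ E ∧ pb k ∈ E := by rw [inE, Finset.mem_filter]; simp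

lemma tree_bound {E : Finset (Option (Fin n × Fin 3))} (h : 1 ≤ (inE E).card) :
    (inE E).card + 1 ≤ E.card := by
  have hwit : ∃ w ∈ E, ∀ k ∈ inE E, pb k ≠ w := by
    by_cases h0 : (none : Option (Fin n × Fin 3)) ∈ E
    · exact ⟨none, h0, fun k _ => by simp⟩
    obtain ⟨⟨i, j⟩, hk⟩ := (Finset.card_pos (s := inE E)).mp (by omega)
    rw [mem_inE] at hk
    rcases fin3_cases j with rfl | rfl | rfl
    · exact absurd (by simpa using hk.1) h0
    · refine ⟨some (i, 0), by simpa using hk.1, fun k hkF hbk => ?_⟩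
      rw [mem_inE] at hkF
      simp only [pb_def, Option.some_inj] at hbk
      subst hbk
      exact h0 (by simpa using hkF.1)
    · by_cases h1 : ((i, 1) : Fin n × Fin 3) ∈ inE E
      · rw [mem_inE] at h1
        refine ⟨some (i, 0), by simpa using h1.1, fun k hkF hbk => ?_⟩
        rw [mem_inE] at hkF
        simp only [pb_def, Option.some_inj] at hbk
        subst hbk
        exact h0 (by simpa using hkF.1)
      · refine ⟨some (i, 1), by simpa using hk.1, fun k hkF hbk => ?_⟩
        simp only [pb_def, Option.some_inj] at hbk
        subst hbk
        exact h1 hkF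
  obtain ⟨w, hwE, hwnot⟩ := hwit
  have himg : (inE E).image pb ⊆ E.erase w := by
    intro x hx
    simp only [Finset.mem_image] at hx
    obtain ⟨k, hk, rfl⟩ := hx
    exact Finset.mem_erase.mpr ⟨hwnot k hk, (mem_inE.mp hk).2⟩
  have hinj : ((inE E).image pb).card = (inE E).card :=
    Finset.card_image_of_injective _ (fun a b hab => by simpa [pb] using hab)
  have := Finset.card_le_card himg
  rw [hinj, Finset.card_erase_of_mem hwE] at this
  have hpos : 1 ≤ E.card := Finset.card_pos.mpr ⟨w, hwE⟩
  omega

lemma card3_bound {E : Finset (Option (Fin n × Fin 3))}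
    (hconn : ((Gn n).induce (E : Set _)).Connected) (h2 : 2 ≤ E.card)
    (h : 1 ≤ (inE E).card) : 3 ≤ E.card := by
  by_contra hlt
  have hcard : E.card = 2 := by omega
  obtain ⟨k, hk⟩ := (Finset.card_pos (s := inE E)).mp (by omega)
  rw [mem_inE] at hk
  have hne : pa k ≠ pb k := by
    obtain ⟨i, j⟩ := k
    rcases fin3_cases j with rfl | rfl | rfl <;> simp
  have hsub : ({pa k, pb k} : Finset _) ⊆ E := by
    intro x hx
    simp only [Finset.mem_insert, Finset.mem_singleton] at hx
    rcases hx with rfl | rfl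
    exacts [hk.1, hk.2]
  have hEeq : E = {pa k, pb k} := (Finset.eq_of_subset_of_card_le hsub (by
    rw [Finset.card_insert_of_notMem (by simpa using hne), Finset.card_singleton]; omega)).symm
  obtain ⟨w, hw, hwne, hadj⟩ := no_isolated hconn h2 hk.2
  rw [hEeq] at hw
  simp only [Finset.mem_insert, Finset.mem_singleton] at hw
  rcases hw with rfl | rfl
  · rw [Gn_adj] at hadj
    exact hadj.2.2 (rel_pa_pb k)
  · exact hwne rfl

lemma card4_bound {E : Finset (Option (Fin n × Fin 3))}
    (hconn : ((Gn n).induce (E : Set _)).Connected) (h2 : 2 ≤ E.card)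
    (h : 2 ≤ (inE E).card) : 4 ≤ E.card := by
  by_contra hlt
  have hcard : E.card = 3 := by
    have := card3_bound hconn h2 (by omega)
    omega
  obtain ⟨k, hk, k', hk', hkk⟩ := Finset.one_lt_card.mp h
  rw [mem_inE] at hk hk'
  obtain ⟨i, j⟩ := k
  obtain ⟨i', j'⟩ := k'
  by_cases hii : i = i'
  · subst hii
    have hjj : j ≠ j' := by rintro rfl; exact hkk rfl
    -- same leg
    rcases fin3_cases j with rfl | rfl | rfl <;> rcases fin3_cases j' with rfl | rfl | rfl <;>
      simp only [pa_zero, pa_one, pa_two, pb_def] at hk hk'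
    · exact hjj rfl
    · exact middle_contra hconn hcard hk.1 hk'.1 hk'.2 (by simp) (by simp) (by simp)
        (Or.inr (by simp)) (Or.inl (by simp))
    · exact four_contra hcard hk.1 hk.2 hk'.1 hk'.2 (by simp) (by simp) (by simp)
        (by simp) (by simp) (by simp)
    · exact middle_contra hconn hcard hk'.1 hk.1 hk.2 (by simp) (by simp) (by simp)
        (Or.inr (by simp)) (Or.inl (by simp))
    · exact hjj rfl
    · exact middle_contra hconn hcard hk.1 hk.2 hk'.2 (by simp) (by simp) (by simp)
        (Or.inr (by simp)) (Or.inl (by simp))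
    · exact four_contra hcard hk'.1 hk'.2 hk.1 hk.2 (by simp) (by simp) (by simp)
        (by simp) (by simp) (by simp)
    · exact middle_contra hconn hcard hk'.1 hk'.2 hk.2 (by simp) (by simp) (by simp)
        (Or.inr (by simp)) (Or.inl (by simp))
    · exact hjj rfl
  · -- different legs
    have hii' : i' ≠ i := Ne.symm hii
    rcases fin3_cases j with rfl | rfl | rfl <;> rcases fin3_cases j' with rfl | rfl | rfl <;>
      simp only [pa_zero, pa_one, pa_two, pb_def] at hk hk'
    · exact middle_contra hconn hcard hk.2 hk.1 hk'.2 (by simp) (by simp) (by simp [hii])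
        (Or.inl (by simp)) (Or.inl (by simp))
    all_goals
      exact four_contra hcard hk.1 hk.2 hk'.1 hk'.2 (by simp) (by simp [hii])
        (by simp [hii]) (by simp [hii]) (by simp [hii]) (by simp [hii])

lemma edge_bound {E : Finset (Option (Fin n × Fin 3))}
    (hconn : ((Gn n).induce (E : Set _)).Connected) (h2 : 2 ≤ E.card) :
    2 * (inE E).card ≤ 3 * (E.card - 2) := by
  rcases Nat.eq_zero_or_pos (inE E).card with h | h
  · simp [h]
  rcases Nat.lt_or_ge (inE E).card 2 with hs | hs
  · have := card3_bound hconn h2 h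
    omega
  rcases Nat.lt_or_ge (inE E).card 3 with hs3 | hs3
  · have := card4_bound hconn h2 hs
    omega
  · have := tree_bound h
    omega

end
section LowerTotal
open SimpleGraph
variable {n : ℕ}

lemma pa_ne_pb (k : Fin n × Fin 3) : pa k ≠ pb k := by
  obtain ⟨i, j⟩ := k
  rcases fin3_cases j with rfl | rfl | rfl <;> simp

lemma not_Gn_adj_pa_pb (k : Fin n × Fin 3) : ¬ (Gn n).Adj (pa k) (pb k) := fun hadj =>
  ((Gn_adj _ _).mp hadj).2.1 (rel_pa_pb k)

lemma hcost_lower {H : Finset (Finset (Option (Fin n × Fin 3)))}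
    (hH : (Gn n).ConnectingHypergraph H) : 2 * n ≤ hcost H := by
  have hcover : ∀ k : Fin n × Fin 3, ∃ E ∈ H, k ∈ inE E := by
    intro k
    obtain ⟨E, hE, h1, h2⟩ := hH.2 (pa k) (pb k) (pa_ne_pb k) (not_Gn_adj_pa_pb k)
    exact ⟨E, hE, mem_inE.mpr ⟨h1, h2⟩⟩
  have hsub : (Finset.univ : Finset (Fin n × Fin 3)) ⊆ H.biUnion (fun E => inE E) := by
    intro k _
    obtain ⟨E, hE, hk⟩ := hcover k
    exact Finset.mem_biUnion.mpr ⟨E, hE, hk⟩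
  have h1 : 3 * n ≤ ∑ E ∈ H, (inE E).card := by
    calc 3 * n = (Finset.univ : Finset (Fin n × Fin 3)).card := by
          simp [Finset.card_univ]; ring
      _ ≤ (H.biUnion (fun E => inE E)).card := Finset.card_le_card hsub
      _ ≤ ∑ E ∈ H, (inE E).card := Finset.card_biUnion_le
  have h2 : ∑ E ∈ H, 2 * (inE E).card ≤ ∑ E ∈ H, 3 * (E.card - 2) := by
    refine Finset.sum_le_sum fun E hE => ?_
    obtain ⟨hc2, hconn⟩ := hH.1 E hE
    exact edge_bound hconn hc2
  have h3 : 2 * (3 * n) ≤ 2 * ∑ E ∈ H, (inE E).card := Nat.mul_le_mul_left 2 h1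
  rw [Finset.mul_sum] at h3
  have h4 : ∑ E ∈ H, 3 * (E.card - 2) = 3 * hcost H := by rw [hcost, Finset.mul_sum]
  omega

end LowerTotal

section MoreAux
open SimpleGraph
variable {n : ℕ} 

lemma spider_connected (n : ℕ) : (spider n).Connected := by
  rw [connected_iff_exists_forall_reachable]
  refine ⟨none, ?_⟩
  have h0 : ∀ i : Fin n, (spider n).Reachable none (some (i, 0)) := fun i =>
    (by rw [spider_adj]; simp : (spider n).Adj none (some (i,0))).reachable
  have h1 : ∀ i : Fin n, (spider n).Reachable none (some (i, 1)) := fun i =>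
    (h0 i).trans (by rw [spider_adj]; simp : (spider n).Adj (some (i,0)) (some (i,1))).reachable
  have h2 : ∀ i : Fin n, (spider n).Reachable none (some (i, 2)) := fun i =>
    (h1 i).trans (by rw [spider_adj]; simp : (spider n).Adj (some (i,1)) (some (i,2))).reachable
  rintro (_ | ⟨i, a⟩)
  · rfl
  · fin_cases a
    exacts [h0 i, h1 i, h2 i]

lemma Gn_connected (hn : 2 ≤ n) : (Gn n).Connected := by
  have hne : ∀ i : Fin n, ∃ j : Fin n, j ≠ i := by
    intro i
    refine ⟨⟨if i.val = 0 then 1 else 0, by split <;> omega⟩, ?_⟩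
    intro h
    apply_fun Fin.val at h
    simp at h
    split at h <;> omega
  rw [connected_iff_exists_forall_reachable]
  refine ⟨none, ?_⟩
  rintro (_ | ⟨i, a⟩)
  · rfl
  · obtain ⟨j, hj⟩ := hne i
    have h1 : (Gn n).Adj none (some (i, 1)) := by rw [Gn_adj]; simp
    have h2 : (Gn n).Adj none (some (i, 2)) := by rw [Gn_adj]; simp
    have h3 : (Gn n).Adj none (some (j, 1)) := by rw [Gn_adj]; simp
    have h4 : (Gn n).Adj (some (j, 1)) (some (i, 0)) := by rw [Gn_adj]; simp [hj, hj.symm]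
    fin_cases a
    exacts [h3.reachable.trans h4.reachable, h1.reachable, h2.reachable]
def legset (i : Fin n) : Finset (Option (Fin n × Fin 3)) :=
  {none, some (i, 0), some (i, 1), some (i, 2)}

lemma legset_card (i : Fin n) : (legset i).card = 4 := by
  rw [legset]
  rw [Finset.card_insert_of_notMem (by simp), Finset.card_insert_of_notMem (by simp),
    Finset.card_insert_of_notMem (by simp), Finset.card_singleton]

lemma induce_adj_iff {V : Type*} (G : SimpleGraph V) (s : Set V) (u v : s) :
    (G.induce s).Adj u v ↔ G.Adj u.1 v.1 := Iff.rfl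

lemma legset_connected (i : Fin n) : ((Gn n).induce ((legset i : Finset (Option (Fin n × Fin 3))) : Set (Option (Fin n × Fin 3)))).Connected := by
  rw [connected_iff_exists_forall_reachable]
  have hmem : ∀ x ∈ legset i, x ∈ ((legset i : Finset (Option (Fin n × Fin 3))) : Set (Option (Fin n × Fin 3))) := fun x hx => by simpa using hx
  set s : Set (Option (Fin n × Fin 3)) := (↑(legset i) : Set (Option (Fin n × Fin 3))) with hs
  have h0 : (none : Option (Fin n × Fin 3)) ∈ s := hmem _ (by simp [legset])
  have h1 : some (i,(0:Fin 3)) ∈ s := hmem _ (by simp [legset])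
  have h2 : some (i,(1:Fin 3)) ∈ s := hmem _ (by simp [legset])
  have h3 : some (i,(2:Fin 3)) ∈ s := hmem _ (by simp [legset])
  refine ⟨⟨none, h0⟩, ?_⟩
  have hb : ((Gn n).induce s).Adj ⟨none, h0⟩ ⟨some (i,1), h2⟩ := by
    rw [induce_adj_iff, Gn_adj]; simp
  have hc : ((Gn n).induce s).Adj ⟨none, h0⟩ ⟨some (i,2), h3⟩ := by
    rw [induce_adj_iff, Gn_adj]; simp
  have ha : ((Gn n).induce s).Adj ⟨some (i,2), h3⟩ ⟨some (i,0), h1⟩ := by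
    rw [induce_adj_iff, Gn_adj]; simp
  rintro ⟨x, hx⟩
  have hx' : x = none ∨ x = some (i,0) ∨ x = some (i,1) ∨ x = some (i,2) := by
    simpa [hs, legset] using hx
  rcases hx' with rfl | rfl | rfl | rfl
  · rfl
  · exact hc.reachable.trans ha.reachable
  · exact hb.reachable
  · exact hc.reachable

lemma legs_connecting (hn : 1 ≤ n) : (Gn n).ConnectingHypergraph (legs n) := by
  constructor
  · intro E hE
    simp only [legs, Finset.mem_image, Finset.mem_univ, true_and] at hE
    obtain ⟨i, rfl⟩ := hE
    exact ⟨by rw [show ({none, some (i,0), some (i,1), some (i,2)} : Finset _) = legset i from rfl, legset_card]; omega,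
      legset_connected i⟩
  · intro u v huv hadj
    rw [Gn_adj] at hadj
    push_neg at hadj
    have hrel : spiderRel n u v ∨ spiderRel n v u := by
      by_contra h
      push_neg at h
      exact h.2 (hadj huv h.1)
    have key : ∃ i : Fin n, u ∈ legset i ∧ v ∈ legset i := by
      rcases hrel with h | h <;>
      · rcases h with ⟨h1, i, h2⟩ | ⟨i, h1, h2⟩ | ⟨i, h1, h2⟩ <;>
          exact ⟨i, by subst h1; subst h2; simp [legset], by subst h1; subst h2; simp [legset]⟩
    obtain ⟨i, hu, hv⟩ := key
    exact ⟨legset i, by simp only [legs, Finset.mem_image]; exact ⟨i, Finset.mem_univ i, rfl⟩, hu, hv⟩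

lemma legs_card (hn : 1 ≤ n) : hcost (legs n) = 2 * n := by
  have hinj : Function.Injective (fun i : Fin n => legset i) := by
    intro i j h
    simp only at h
    have : some (i, (0:Fin 3)) ∈ legset j := by rw [← h]; simp [legset]
    simpa [legset] using this
  rw [hcost, legs]
  rw [show (Finset.univ.image fun i : Fin n => ({none, some (i, 0), some (i, 1), some (i, 2)} : Finset (Option (Fin n × Fin 3)))) = Finset.univ.image (fun i : Fin n => legset i) from rfl]
  rw [Finset.sum_image (fun a _ b _ h => hinj h)]
  simp [legset_card]
  ring

end MoreAux

lemma tau_of_connected {V : Type*} [Fintype V] (G : SimpleGraph V)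
    (h : Gᶜ.Connected) (hc : G.Connected) (hcard : 2 ≤ Fintype.card V) :
    tau G = Fintype.card V - 2 := by
  classical
  obtain ⟨v0⟩ := h.nonempty
  have hall : ∀ C : Gᶜ.ConnectedComponent, C = Gᶜ.connectedComponentMk v0 := by
    intro C
    induction C using SimpleGraph.ConnectedComponent.ind with
    | _ v => exact SimpleGraph.ConnectedComponent.sound (h.preconnected v v0)
  have hsupp : ∀ C : Gᶜ.ConnectedComponent, C.supp = Set.univ := by
    intro C
    rw [hall C]
    ext w
    simp only [SimpleGraph.ConnectedComponent.mem_supp_iff, Set.mem_univ, iff_true]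
    exact SimpleGraph.ConnectedComponent.sound (h.preconnected w v0)
  haveI : Unique Gᶜ.ConnectedComponent :=
    ⟨⟨Gᶜ.connectedComponentMk v0⟩, hall⟩
  unfold tau
  rw [@Fintype.sum_unique _ _ (Fintype.ofFinite _) _ this]
  simp only [hsupp]
  rw [Set.ncard_univ, Nat.card_eq_fintype_card]
  rw [if_pos hcard]
  have hco : (induce (default : Gᶜ.ConnectedComponent).supp G).Connected := by
    rw [hsupp]; exact ((induceUnivIso G).connected_iff).mpr hc
  rw [if_pos hco]

lemma opt_eq {n : ℕ} (hn : 1 ≤ n) : opt n = 2 * n := by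
  have hmem : 2 * n ∈ {c : ℕ | ∃ H, (Gn n).ConnectingHypergraph H ∧ hcost H = c} :=
    ⟨legs n, legs_connecting hn, legs_card hn⟩
  refine le_antisymm (Nat.sInf_le hmem) (le_csInf ⟨_, hmem⟩ ?_)
  rintro b ⟨H, hH, rfl⟩
  exact hcost_lower hH

lemma tau_Gn {n : ℕ} (hn : 2 ≤ n) : tau (Gn n) = 3 * n - 1 := by
  have hcompl : (Gn n)ᶜ = spider n := compl_compl _
  have hcard : Fintype.card (Option (Fin n × Fin 3)) = 3 * n + 1 := by simp; ring
  have h := tau_of_connected (Gn n) (by rw [hcompl]; exact spider_connected n)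
    (Gn_connected hn) (by omega)
  rw [h, hcard]
  omega

/-- For every `n ≥ 2`, `Gₙ` is connected and co-connected, `τ(Gₙ) = 3n − 1`, and the
family `{{c, v_{i,1}, v_{i,2}, v_{i,3}} : 1 ≤ i ≤ n}` is a connecting hypergraph of
`Gₙ` of cost `2n`; hence `τ(Gₙ)/opt(Gₙ)` tends to `3/2`. -/
theorem stmt16 :
    (∀ n : ℕ, 2 ≤ n →
      (Gn n).Connected ∧ ((Gn n)ᶜ).Connected ∧ tau (Gn n) = 3 * n - 1 ∧
      (Gn n).ConnectingHypergraph (legs n) ∧ hcost (legs n) = 2 * n) ∧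
    Filter.Tendsto (fun n : ℕ => (tau (Gn n) : ℝ) / (opt n : ℝ))
      Filter.atTop (nhds (3 / 2)) := by
  constructor
  · intro n hn
    refine ⟨Gn_connected hn, ?_, tau_Gn hn, legs_connecting (by omega), legs_card (by omega)⟩
    have hcompl : (Gn n)ᶜ = spider n := compl_compl (spider n)
    rw [hcompl]
    exact spider_connected n
  · have key : Filter.Tendsto (fun n : ℕ => 3/2 - (1/(n:ℝ))/2) Filter.atTop (nhds (3/2)) := by
      have h0 := (tendsto_one_div_atTop_nhds_zero_nat (𝕜 := ℝ)).div_const 2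
      simpa using tendsto_const_nhds.sub h0
    refine key.congr' ?_
    filter_upwards [Filter.eventually_ge_atTop 2] with n hn
    rw [tau_Gn hn, opt_eq (by omega)]
    have hn0 : (n : ℝ) ≠ 0 := by
      have : (0:ℝ) < n := by exact_mod_cast Nat.lt_of_lt_of_le (by norm_num) hn
      linarith
    rw [Nat.cast_sub (by omega)]
    push_cast
    field_simp
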